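/- Let p₁, ..., p_n be distinct primes and let p be a square-free positive integer coprime to p₁⋯p_n with p > 1. Then √p does not lie in the field K_n = Q(√p₁, ..., √p_n); moreover [K_n : Q] = 2^n. -/

import Mathlib

open IntermediateField Polynomial

private lemma quad_repr (F : IntermediateField ℚ ℝ) (α : ℝ) (c : F)
    (hc : ((c : ℝ)) = α * α) {x : ℝ} (hx : x ∈ IntermediateField.adjoin F {α}) :
    ∃ y z : F, x = y + z * α := by
  have hint : IsIntegral F α := ⟨X ^ 2 - C c, monic_X_pow_sub_C c (by norm_num), by simp [sq, hc]⟩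
  have h2 : x ∈ Algebra.adjoin F {α} := by
    rw [← IntermediateField.adjoin_simple_toSubalgebra_of_isAlgebraic hint.isAlgebraic]
    exact hx
  clear hx
  induction h2 using Algebra.adjoin_induction with
  | mem u hu =>
    rcases hu with rfl
    exact ⟨0, 1, by simp⟩
  | algebraMap r => exact ⟨r, 0, by simp⟩
  | add u v hu hv ihu ihv =>
    obtain ⟨y, z, rfl⟩ := ihu
    obtain ⟨y', z', rfl⟩ := ihv
    exact ⟨y + y', z + z', by push_cast; ring⟩
  | mul u v hu hv ihu ihv =>
    obtain ⟨y, z, rfl⟩ := ihu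
    obtain ⟨y', z', rfl⟩ := ihv
    exact ⟨y * y' + c * (z * z'), y * z' + z * y', by push_cast [hc]; ring⟩

private lemma quad_finrank (F : IntermediateField ℚ ℝ) (α : ℝ) (c : F)
    (hc : ((c : ℝ)) = α * α) (hα : α ∉ F) :
    Module.finrank F (IntermediateField.adjoin F {α}) = 2 := by
  have hint : IsIntegral F α := ⟨X ^ 2 - C c, monic_X_pow_sub_C c (by norm_num), by simp [sq, hc]⟩
  have hroot : ∀ b : F, b ^ 2 ≠ c := by
    intro b hb
    have hb2 : ((b : ℝ)) ^ 2 = α ^ 2 := by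
      have := congrArg (fun t : F => (t : ℝ)) hb
      push_cast at this
      rw [this, hc, sq]
    rcases sq_eq_sq_iff_eq_or_eq_neg.mp hb2 with h | h
    · exact hα (h ▸ b.2)
    · refine hα ?_
      have h2 : α = ((-b : F) : ℝ) := by push_cast; linarith [h]
      exact h2 ▸ (-b).2
  have hirr : Irreducible (X ^ 2 - C c) :=
    X_pow_sub_C_irreducible_of_prime Nat.prime_two hroot
  have hmin : minpoly F α = X ^ 2 - C c := by
    refine (minpoly.eq_of_irreducible_of_monic hirr ?_ (monic_X_pow_sub_C c two_ne_zero)).symm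
    simp [sq, hc]
  rw [IntermediateField.adjoin.finrank hint, hmin, natDegree_X_pow_sub_C]

private lemma key (n : ℕ) : ∀ (p : Fin n → ℕ), (∀ i, Nat.Prime (p i)) →
    Function.Injective p →
    (∀ q : ℕ, 1 < q → Squarefree q → Nat.Coprime q (∏ i, p i) →
      Real.sqrt q ∉ IntermediateField.adjoin ℚ (Set.range fun i => Real.sqrt (p i))) ∧
    Module.finrank ℚ
      (IntermediateField.adjoin ℚ (Set.range fun i => Real.sqrt (p i))) = 2 ^ n := by
  induction n with
  | zero =>
    intro p hp hinj
    rw [Set.range_eq_empty, IntermediateField.adjoin_empty]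
    constructor
    · intro q hq1 hqsf _ h
      rw [IntermediateField.mem_bot] at h
      obtain ⟨r, hr⟩ := h
      have hirr : Irrational (Real.sqrt q) := by
        rw [irrational_sqrt_natCast_iff]
        rintro ⟨k, rfl⟩
        have hk := hqsf k (dvd_refl _)
        rw [Nat.isUnit_iff] at hk
        subst hk
        norm_num at hq1
      exact hirr ⟨r, hr⟩
    · simp [IntermediateField.finrank_bot (F := ℚ) (E := ℝ)]
  | succ n ih =>
    intro p hp hinj
    set p' : Fin n → ℕ := fun i => p i.castSucc with hp'def
    have hp' : ∀ i, Nat.Prime (p' i) := fun i => hp _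
    have hinj' : Function.Injective p' := fun i j h =>
      Fin.castSucc_injective n (hinj h)
    obtain ⟨H1, H2⟩ := ih p' hp' hinj'
    set F : IntermediateField ℚ ℝ :=
      IntermediateField.adjoin ℚ (Set.range fun i => Real.sqrt (p' i)) with hFdef
    set α : ℝ := Real.sqrt (p (Fin.last n)) with hαdef
    -- coprimality of the last prime with the product of the others
    have hl : Nat.Coprime (p (Fin.last n)) (∏ i, p' i) := by
      refine Nat.Coprime.prod_right fun i _ => ?_
      exact (Nat.coprime_primes (hp _) (hp' i)).mpr
        fun h => (Fin.castSucc_lt_last i).ne' (hinj h)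
    have hsplit : (∏ i, p i) = (∏ i, p' i) * p (Fin.last n) := Fin.prod_univ_castSucc p
    have hα : α ∉ F :=
      H1 (p (Fin.last n)) (hp _).one_lt (hp _).squarefree hl
    set c : F := ((p (Fin.last n) : ℕ) : F) with hcdef
    have hcc : ((c : ℝ)) = ((p (Fin.last n) : ℕ) : ℝ) := by push_cast [hcdef]; ring
    have hc : ((c : ℝ)) = α * α := by
      rw [hcc, hαdef, Real.mul_self_sqrt (by positivity)]
    have hrange : (Set.range fun i : Fin (n+1) => Real.sqrt (p i)) =
        (Set.range fun i : Fin n => Real.sqrt (p' i)) ∪ {α} := by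
      ext x
      simp only [Set.mem_union, Set.mem_range, Set.mem_singleton_iff]
      constructor
      · rintro ⟨i, rfl⟩
        rcases Fin.eq_castSucc_or_eq_last i with ⟨j, rfl⟩ | rfl
        · exact Or.inl ⟨j, rfl⟩
        · exact Or.inr rfl
      · rintro (⟨j, rfl⟩ | rfl)
        · exact ⟨j.castSucc, rfl⟩
        · exact ⟨Fin.last n, rfl⟩
    have hK : IntermediateField.adjoin ℚ (Set.range fun i : Fin (n+1) => Real.sqrt (p i)) =
        (IntermediateField.adjoin F {α}).restrictScalars ℚ := by
      rw [hrange, ← IntermediateField.adjoin_adjoin_left]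
      rfl
    have hint : IsIntegral F α :=
      ⟨X ^ 2 - C c, monic_X_pow_sub_C c (by norm_num), by simp [sq, hc]⟩
    constructor
    · -- non-membership
      intro q hq1 hqsf hcop hmem
      have hcop' : Nat.Coprime q (∏ i, p' i) :=
        Nat.Coprime.coprime_dvd_right ⟨p (Fin.last n), hsplit⟩ hcop
      have hcopl : Nat.Coprime q (p (Fin.last n)) :=
        Nat.Coprime.coprime_dvd_right ⟨∏ i, p' i, by rw [hsplit, mul_comm]⟩ hcop
      rw [hK, IntermediateField.mem_restrictScalars] at hmem
      obtain ⟨y, z, hsq⟩ := quad_repr F α c hc hmem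
      have hq0 : (0:ℝ) ≤ (q : ℝ) := by positivity
      have hsq2 : (q : ℝ) = (y:ℝ)^2 + (z:ℝ)^2 * (c:ℝ) + 2*(y:ℝ)*(z:ℝ)*α := by
        have h := Real.sq_sqrt hq0
        rw [hsq] at h
        linear_combination -h - (z:ℝ)^2 * hc
      by_cases hz : z = 0
      · subst hz
        refine H1 q hq1 hqsf hcop' ?_
        rw [hsq]
        simpa using y.2
      by_cases hy : y = 0
      · subst hy
        -- √(q * p_last) ∈ F
        refine H1 (q * p (Fin.last n))
          (lt_of_lt_of_le hq1 (Nat.le_mul_of_pos_right _ (hp _).pos))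
          ((Nat.squarefree_mul hcopl).mpr ⟨hqsf, (hp _).squarefree⟩)
          (Nat.coprime_mul_iff_left.mpr ⟨hcop', hl⟩) ?_
        have hprod : Real.sqrt ((q * p (Fin.last n) : ℕ) : ℝ) = ((z * c : F) : ℝ) := by
          push_cast
          rw [Real.sqrt_mul hq0, hsq]
          push_cast
          linear_combination (-(z:ℝ)) * hc
        rw [hprod]
        exact (z * c).2
      · -- both nonzero: α ∈ F, contradiction
        have hyR : (y : ℝ) ≠ 0 := fun h => hy (by exact_mod_cast Subtype.ext h)
        have hzR : (z : ℝ) ≠ 0 := fun h => hz (by exact_mod_cast Subtype.ext h)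
        set w : F := (((q : ℕ) : F) - y^2 - z^2*c) / (2*y*z) with hwdef
        have hdiv : ((w : ℝ)) =
            ((((q : ℕ) : F) : ℝ) - (y:ℝ)^2 - (z:ℝ)^2*(c:ℝ)) / (2*(y:ℝ)*(z:ℝ)) := rfl
        have hw : ((w : ℝ)) = α := by
          rw [hdiv]
          have hqF : ((((q : ℕ) : F)) : ℝ) = (q : ℝ) := by push_cast; ring
          rw [hqF, hsq2]
          field_simp
          ring
        exact hα (hw ▸ w.2)
    · -- finrank
      rw [hK]
      haveI : FiniteDimensional F (IntermediateField.adjoin F {α}) :=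
        IntermediateField.adjoin.finiteDimensional hint
      haveI : Module.Free F (IntermediateField.adjoin F {α}) := Module.Free.of_divisionRing _ _
      have e : Module.finrank ℚ ((IntermediateField.adjoin F {α}).restrictScalars ℚ) =
          Module.finrank ℚ (IntermediateField.adjoin F {α}) := rfl
      rw [e, ← Module.finrank_mul_finrank ℚ F (IntermediateField.adjoin F {α}),
        H2, quad_finrank F α c hc hα]
      ring

/-- Let `p₁, …, p_n` be distinct primes and `p > 1` a square-free positive integer coprime
to `p₁⋯p_n`. Then `√p ∉ K_n = ℚ(√p₁, …, √p_n)` and `[K_n : ℚ] = 2^n`. -/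
theorem stmt19 (n : ℕ) (p : Fin n → ℕ) (hp : ∀ i, Nat.Prime (p i))
    (hpinj : Function.Injective p)
    (q : ℕ) (hq1 : 1 < q) (hqsf : Squarefree q)
    (hcop : Nat.Coprime q (∏ i, p i)) :
    Real.sqrt q ∉
        IntermediateField.adjoin ℚ (Set.range fun i => Real.sqrt (p i)) ∧
    Module.finrank ℚ
        (IntermediateField.adjoin ℚ (Set.range fun i => Real.sqrt (p i))) = 2 ^ n := by
  obtain ⟨H1, H2⟩ := key n p hp hpinj
  exact ⟨H1 q hq1 hqsf hcop, H2⟩
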